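/- On H_m(𝔹), for every f ∈ H_m(𝔹) the identity M_z* δ f = (M_z* M_z)^{-1} (M_z* f) holds, where (M_z* M_z)^{-1} denotes the inverse of the invertible operator M_z* M_z : Im M_z* → Im M_z*. -/

import Mathlib

open scoped InnerProductSpace

set_option synthInstance.maxHeartbeats 400000
set_option maxHeartbeats 800000

instance piLp_completeSpace {H : Type*} [NormedAddCommGroup H] [InnerProductSpace ℂ H]
    [CompleteSpace H] {n : ℕ} : CompleteSpace (PiLp 2 (fun _ : Fin n => H)) := by
  have e := (PiLp.continuousLinearEquiv 2 ℂ (fun _ : Fin n => H)).symm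
  exact (e.isUniformEmbedding.isUniformInducing.completeSpace_congr e.surjective).mp inferInstance

/-- The weight `ρ_m(α) = (m+|α|-1)!/(α!(m-1)!)`. -/
noncomputable def rhoR (m : ℕ) {n : ℕ} (α : Fin n → ℕ) : ℝ :=
  ((m + (∑ i, α i) - 1).factorial : ℝ) /
    ((∏ i, ((α i).factorial : ℝ)) * ((m - 1).factorial : ℝ))



lemma rhoR_pos (m : ℕ) {n : ℕ} (α : Fin n → ℕ) : 0 < rhoR m α := by
  unfold rhoR
  apply div_pos
  · exact_mod_cast Nat.factorial_pos _
  · apply mul_pos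
    · exact Finset.prod_pos fun i _ => by exact_mod_cast Nat.factorial_pos _
    · exact_mod_cast Nat.factorial_pos _

lemma update_eq_add_single {n : ℕ} (γ : Fin n → ℕ) (i : Fin n) :
    γ + Pi.single i 1 = Function.update γ i (γ i + 1) := by
  funext j
  by_cases h : j = i
  · subst h; simp
  · simp [h, Function.update_of_ne h, Pi.single_eq_of_ne h]

lemma rhoR_ratio {n : ℕ} (m : ℕ) (hm : 1 ≤ m) (i : Fin n) (γ : Fin n → ℕ) :
    rhoR m γ / rhoR m (γ + Pi.single i 1) =
      ((γ i + 1 : ℕ) : ℝ) / (((m + ((∑ j, γ j) + 1) - 1 : ℕ)) : ℝ) := by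
  rw [update_eq_add_single]
  set K := ∑ j, γ j with hK
  have hsum : (∑ j, Function.update γ i (γ i + 1) j) = K + 1 := by
    rw [Finset.sum_update_of_mem (Finset.mem_univ i), hK,
      ← Finset.sum_erase_add _ _ (Finset.mem_univ i), Finset.sdiff_singleton_eq_erase]
    ring
  have hprod : (∏ j, ((Function.update γ i (γ i + 1) j).factorial : ℝ))
      = ((γ i + 1) : ℝ) * ∏ j, ((γ j).factorial : ℝ) := by
    rw [← Finset.prod_erase_mul Finset.univ
        (fun j => ((Function.update γ i (γ i + 1) j).factorial : ℝ)) (Finset.mem_univ i),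
      ← Finset.prod_erase_mul Finset.univ (fun j => ((γ j).factorial : ℝ)) (Finset.mem_univ i)]
    rw [Finset.prod_congr rfl (fun j hj => by
      rw [Function.update_of_ne (Finset.ne_of_mem_erase hj)])]
    rw [Function.update_self, Nat.factorial_succ]
    push_cast
    ring
  have h1 : m + (K + 1) - 1 = m + K := by omega
  have h2 : m + K = (m + K - 1) + 1 := by omega
  have hfac : ((m + (K + 1) - 1).factorial : ℝ)
      = ((m + K : ℕ) : ℝ) * ((m + K - 1).factorial : ℝ) := by
    rw [h1, h2, Nat.factorial_succ]
    push_cast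
    ring
  unfold rhoR
  rw [hsum, hprod, hfac]
  have p1 : (0:ℝ) < ∏ j, ((γ j).factorial : ℝ) :=
    Finset.prod_pos fun j _ => by exact_mod_cast Nat.factorial_pos _
  have p2 : (0:ℝ) < ((m - 1).factorial : ℝ) := by exact_mod_cast Nat.factorial_pos _
  have p3 : (0:ℝ) < ((m + K - 1).factorial : ℝ) := by exact_mod_cast Nat.factorial_pos _
  have p4 : (0:ℝ) < ((m + K : ℕ) : ℝ) := by
    have : 1 ≤ m + K := by omega
    exact_mod_cast Nat.lt_of_lt_of_le Nat.zero_lt_one this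
  rw [h1]
  rw [← hK]
  field_simp
  push_cast
  ring

/-- On `H_m(𝔹)` — modelled abstractly via the orthogonal monomial family `e α` with dense
span — the identity `M_z* δ f = (M_z* M_z)^{-1}(M_z* f)` holds for every `f ∈ H_m(𝔹)`;
since `M_z* δ f` lies in `Im M_z*`, on which `M_z* M_z` is invertible, this identity is
expressed equivalently as `(M_z* M_z)(M_z* δ f) = M_z* f`. -/
theorem cauchy_dual_identity (n m : ℕ) (hm : 1 ≤ m)
    {H : Type*} [NormedAddCommGroup H] [InnerProductSpace ℂ H] [CompleteSpace H]
    (e : (Fin n → ℕ) → H)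
    (horth : ∀ α β, ⟪e α, e β⟫_ℂ = if α = β then ((rhoR m α)⁻¹ : ℂ) else 0)
    (hdense : Dense ((Submodule.span ℂ (Set.range e) : Submodule ℂ H) : Set H))
    (Mz : Fin n → H →L[ℂ] H)
    (hMz : ∀ i α, Mz i (e α) = e (α + Pi.single i 1))
    (Mrow : PiLp 2 (fun _ : Fin n => H) →L[ℂ] H)
    (hMrow : ∀ f, Mrow f = ∑ i, Mz i (f i))
    (δ : H →L[ℂ] H)
    (hδ : ∀ α, δ (e α) = if (∑ i, α i) = 0 then e α
        else (((m : ℂ) + (∑ i, α i) - 1) / ((∑ i, α i : ℕ) : ℂ)) • e α) :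
    ∀ f : H, (Mrow).adjoint (Mrow ((Mrow).adjoint (δ f))) = (Mrow).adjoint f := by
  -- extensionality from density
  have hext : ∀ x y : H, (∀ α, ⟪e α, x⟫_ℂ = ⟪e α, y⟫_ℂ) → x = y := by
    intro x y h
    have hz : innerSL ℂ (x - y) = 0 := by
      apply ContinuousLinearMap.ext_on hdense
      rintro v ⟨α, rfl⟩
      have : ⟪e α, x - y⟫_ℂ = 0 := by rw [inner_sub_right, h α, sub_self]
      simp only [innerSL_apply_apply, ContinuousLinearMap.zero_apply]
      rw [← inner_conj_symm, this, map_zero]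
    have h3 : ⟪x - y, x - y⟫_ℂ = 0 := by
      rw [show (⟪x - y, x - y⟫_ℂ) = (innerSL ℂ (x - y)) (x - y) from rfl, hz]
      rfl
    exact sub_eq_zero.mp (inner_self_eq_zero.mp h3)
  classical
  set A : H →L[ℂ] PiLp 2 (fun _ : Fin n => H) :=
    ((PiLp.continuousLinearEquiv 2 ℂ (fun _ : Fin n => H)).symm.toContinuousLinearMap).comp
      (ContinuousLinearMap.pi fun i => (Mz i).adjoint) with hAdef
  have hA : Mrow.adjoint = A := by
    symm
    rw [ContinuousLinearMap.eq_adjoint_iff]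
    intro x y
    rw [hMrow, inner_sum, PiLp.inner_apply]
    refine Finset.sum_congr rfl fun i _ => ?_
    have h1 : (A x) i = (Mz i).adjoint x := rfl
    rw [h1, ContinuousLinearMap.adjoint_inner_left]
  have hAcomp : ∀ (h : H) (i : Fin n), (Mrow.adjoint h) i = (Mz i).adjoint h := by
    intro h i
    rw [hA]
    rfl
  have hadj0 : ∀ (i : Fin n) (β : Fin n → ℕ), β i = 0 → (Mz i).adjoint (e β) = 0 := by
    intro i β hβ
    apply hext
    intro α
    rw [ContinuousLinearMap.adjoint_inner_right, hMz, horth, inner_zero_right]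
    have hne : ¬ (α + Pi.single i 1 = β) := by
      intro h
      have := congrFun h i
      simp only [Pi.add_apply, Pi.single_eq_same] at this
      omega
    rw [if_neg hne]
  have hadj1 : ∀ (i : Fin n) (γ : Fin n → ℕ),
      (Mz i).adjoint (e (γ + Pi.single i 1)) =
        ((rhoR m γ / rhoR m (γ + Pi.single i 1) : ℝ) : ℂ) • e γ := by
    intro i γ
    apply hext
    intro α
    rw [ContinuousLinearMap.adjoint_inner_right, hMz, horth, inner_smul_right, horth]
    by_cases h : α = γ
    · subst h
      rw [if_pos rfl, if_pos rfl]
      have h1 : rhoR m α ≠ 0 := ne_of_gt (rhoR_pos m α)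
      have h2 : rhoR m (α + Pi.single i 1) ≠ 0 := ne_of_gt (rhoR_pos m _)
      field_simp [Complex.ofReal_ne_zero.mpr h1, Complex.ofReal_ne_zero.mpr h2]
      rw [Complex.ofReal_div]
      field_simp [Complex.ofReal_ne_zero.mpr h2]
    · rw [if_neg (fun hc : α + Pi.single i 1 = γ + Pi.single i 1 => h (by
        funext j
        have := congrFun hc j
        simp only [Pi.add_apply] at this
        omega)), if_neg h, mul_zero]
  have hkey : ∀ β : Fin n → ℕ,
      Mrow (Mrow.adjoint (e β)) =
        (((((∑ i, β i : ℕ) : ℝ) / (((m + (∑ i, β i) - 1 : ℕ)) : ℝ)) : ℝ) : ℂ) • e β := by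
    intro β
    rw [hMrow]
    have hterm : ∀ i, Mz i ((Mz i).adjoint (e β)) =
        ((((β i : ℕ) : ℝ) / (((m + (∑ j, β j) - 1 : ℕ)) : ℝ) : ℝ) : ℂ) • e β := by
      intro i
      by_cases hb : β i = 0
      · rw [hadj0 i β hb, map_zero, hb]
        simp
      · obtain ⟨b, hb'⟩ := Nat.exists_eq_succ_of_ne_zero hb
        set γ := Function.update β i b with hγ
        have hβγ : β = γ + Pi.single i 1 := by
          funext j
          by_cases hj : j = i
          · subst hj
            simp [hγ, hb']
          · simp [hγ, Function.update_of_ne hj, Pi.single_eq_of_ne hj]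
        have hsum : (∑ j, β j) = (∑ j, γ j) + 1 := by
          rw [hβγ]
          simp [Finset.sum_add_distrib]
        have hβi : β i = γ i + 1 := by
          rw [hβγ]
          simp
        rw [hβγ, hadj1, map_smul, hMz, ← hβγ]
        congr 2
        rw [show rhoR m β = rhoR m (γ + Pi.single i 1) from by rw [← hβγ],
          rhoR_ratio m hm i γ, hβi, hsum]
    calc (∑ i, Mz i ((Mrow.adjoint (e β)) i))
        = ∑ i, ((((β i : ℕ) : ℝ) / (((m + (∑ j, β j) - 1 : ℕ)) : ℝ) : ℝ) : ℂ) • e β := by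
          refine Finset.sum_congr rfl fun i _ => ?_
          rw [hAcomp, hterm]
      _ = (((((∑ i, β i : ℕ) : ℝ) / (((m + (∑ i, β i) - 1 : ℕ)) : ℝ)) : ℝ) : ℂ) • e β := by
          rw [← Finset.sum_smul]
          congr 1
          push_cast
          rw [← Finset.sum_div]
  have hgen : ∀ β : Fin n → ℕ,
      Mrow.adjoint (Mrow (Mrow.adjoint (δ (e β)))) = Mrow.adjoint (e β) := by
    intro β
    by_cases hk : (∑ i, β i) = 0
    · rw [hδ, if_pos hk, hkey, hk]
      have hzero : Mrow.adjoint (e β) = 0 := by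
        apply PiLp.ext; intro i
        rw [hAcomp, hadj0 i β (Finset.sum_eq_zero_iff.mp hk i (Finset.mem_univ i))]
        rfl
      rw [hzero]
      simp
    · rw [hδ, if_neg hk, map_smul, map_smul, hkey, smul_smul]
      set k := ∑ i, β i with hkdef
      have hk1 : 1 ≤ k := Nat.one_le_iff_ne_zero.mpr hk
      have h1 : ((m + k - 1 : ℕ) : ℂ) = (m : ℂ) + (k : ℂ) - 1 := by
        have : ((m + k - 1 : ℕ) : ℂ) = ((m + k : ℕ) : ℂ) - ((1 : ℕ) : ℂ) :=
          by exact_mod_cast Nat.cast_sub (by omega : 1 ≤ m + k)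
        rw [this]
        push_cast
        ring
      have hne1 : ((m + k - 1 : ℕ) : ℂ) ≠ 0 := Nat.cast_ne_zero.mpr (by omega)
      have hne2 : ((k : ℕ) : ℂ) ≠ 0 := Nat.cast_ne_zero.mpr hk
      have hc : ((m : ℂ) + (k : ℂ) - 1) / ((k : ℕ) : ℂ) *
          (((((k : ℕ) : ℝ) / (((m + k - 1 : ℕ)) : ℝ) : ℝ)) : ℂ) = 1 := by
        push_cast
        rw [← h1]
        field_simp
      rw [hc, one_smul]
  intro f
  have hT : ((Mrow.adjoint).comp (Mrow.comp ((Mrow.adjoint).comp δ))) = Mrow.adjoint := by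
    apply ContinuousLinearMap.ext_on hdense
    rintro v ⟨β, rfl⟩
    simpa [ContinuousLinearMap.comp_apply] using hgen β
  have h2 := congrArg (fun T => T f) hT
  simpa [ContinuousLinearMap.comp_apply] using h2
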